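/- Let d ≥ 3 be an integer, α = 4 − d, and define φ(r) = (ω_{d−1}/ω_d) ∫₀^π (r − cos θ)(sin θ)^{d−2} (1 + r² − 2r cos θ)^{(α−2)/2} dθ. Then φ(r)/r is constant on (0,1] and strictly decreasing on [1, ∞). -/

import Mathlib

open Real MeasureTheory

/-- Surface area of the unit sphere in ℝ^m: ω_m = 2 π^{m/2} / Γ(m/2). -/
noncomputable def sphereArea (m : ℕ) : ℝ :=
  2 * Real.pi ^ ((m : ℝ) / 2) / Real.Gamma ((m : ℝ) / 2)

namespace Stmt5Aux

open intervalIntegral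

/-- The kernel. -/
noncomputable def Qk (r θ : ℝ) : ℝ := 1 + r ^ 2 - 2 * r * Real.cos θ

/-- The basic family of integrals. -/
noncomputable def Bi (r : ℝ) (n j : ℕ) (x : ℝ) : ℝ :=
  ∫ θ in (0:ℝ)..π, Real.sin θ ^ n * Real.cos θ ^ j * Qk r θ ^ x

/-- ∫₀^π sin^k. -/
noncomputable def Sv (k : ℕ) : ℝ := ∫ θ in (0:ℝ)..π, Real.sin θ ^ k

variable {r : ℝ}

lemma Qk_pos (hr : 0 < r) (hne : r ≠ 1) (θ : ℝ) : 0 < Qk r θ := by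
  have h1 : Real.cos θ ≤ 1 := Real.cos_le_one θ
  have h2 : (0:ℝ) < (1 - r)^2 := by
    have : (1:ℝ) - r ≠ 0 := by intro h; apply hne; linarith
    positivity
  unfold Qk; nlinarith

lemma Qk_cont (r : ℝ) : Continuous (Qk r) := by unfold Qk; fun_prop

lemma integrand_cont (hr : 0 < r) (hne : r ≠ 1) (n j : ℕ) (x : ℝ) :
    Continuous fun θ => Real.sin θ ^ n * Real.cos θ ^ j * Qk r θ ^ x := by
  apply Continuous.mul
  · fun_prop
  · exact (Qk_cont r).rpow_const (fun θ => Or.inl (Qk_pos hr hne θ).ne')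

lemma integrand_ii (hr : 0 < r) (hne : r ≠ 1) (n j : ℕ) (x : ℝ) :
    IntervalIntegrable (fun θ => Real.sin θ ^ n * Real.cos θ ^ j * Qk r θ ^ x)
      volume 0 π :=
  (integrand_cont hr hne n j x).intervalIntegrable _ _

/-- L3 : multiply by Q. -/
lemma Bi_Qmul (hr : 0 < r) (hne : r ≠ 1) (n j : ℕ) (x : ℝ) :
    Bi r n j (x + 1) = (1 + r ^ 2) * Bi r n j x - 2 * r * Bi r n (j + 1) x := by
  unfold Bi
  rw [← intervalIntegral.integral_const_mul, ← intervalIntegral.integral_const_mul,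
    ← intervalIntegral.integral_sub (((integrand_ii hr hne n j x).const_mul _))
      (((integrand_ii hr hne n (j+1) x).const_mul _))]
  apply intervalIntegral.integral_congr
  intro θ _
  have hQ := (Qk_pos hr hne θ).ne'
  simp only
  rw [Real.rpow_add_one hQ]
  have : Qk r θ = 1 + r ^ 2 - 2 * r * Real.cos θ := rfl
  rw [this]; ring

/-- L4 : sin^2 = 1 - cos^2. -/
lemma Bi_sinsq (hr : 0 < r) (hne : r ≠ 1) (n j : ℕ) (x : ℝ) :
    Bi r (n + 2) j x = Bi r n j x - Bi r n (j + 2) x := by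
  unfold Bi
  rw [← intervalIntegral.integral_sub (integrand_ii hr hne n j x) (integrand_ii hr hne n (j+2) x)]
  apply intervalIntegral.integral_congr
  intro θ _
  simp only
  have hs : Real.sin θ ^ 2 = 1 - Real.cos θ ^ 2 := Real.sin_sq θ
  have : Real.sin θ ^ (n + 2) = Real.sin θ ^ n * (1 - Real.cos θ ^ 2) := by
    rw [pow_add, hs]
  rw [this]; ring

/-- FTC relation. -/
lemma Bi_ftc (hr : 0 < r) (hne : r ≠ 1) (n j : ℕ) (x : ℝ) :
    ((n : ℝ) + 1) * Bi r n (j + 1) x - (j : ℝ) * Bi r (n + 2) (j - 1) x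
      + 2 * x * r * Bi r (n + 2) j (x - 1) = 0 := by
  set F : ℝ → ℝ := fun θ => Real.sin θ ^ (n + 1) * Real.cos θ ^ j * Qk r θ ^ x with hF
  have hder : ∀ θ ∈ Set.uIcc (0:ℝ) π, HasDerivAt F
      (((n:ℝ)+1) * (Real.sin θ ^ n * Real.cos θ ^ (j+1) * Qk r θ ^ x)
       - (j:ℝ) * (Real.sin θ ^ (n+2) * Real.cos θ ^ (j-1) * Qk r θ ^ x)
       + 2 * x * r * (Real.sin θ ^ (n+2) * Real.cos θ ^ j * Qk r θ ^ (x-1))) θ := by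
    intro θ _
    have hQ : HasDerivAt (Qk r) (2 * r * Real.sin θ) θ := by
      have h1 : HasDerivAt (fun θ : ℝ => 1 + r ^ 2 - 2 * r * Real.cos θ)
          (-(2 * r * -Real.sin θ)) θ :=
        ((Real.hasDerivAt_cos θ).const_mul (2*r)).const_sub (1 + r^2)
      exact h1.congr_deriv (by ring)
    have hQx : HasDerivAt (fun θ => Qk r θ ^ x)
        (2 * r * Real.sin θ * x * Qk r θ ^ (x - 1)) θ :=
      hQ.rpow_const (Or.inl (Qk_pos hr hne θ).ne')
    have hs : HasDerivAt (fun θ => Real.sin θ ^ (n+1))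
        ((↑(n+1)) * Real.sin θ ^ n * Real.cos θ) θ := by
      have := (Real.hasDerivAt_sin θ).pow (n+1)
      exact this.congr_deriv (by simp)
    have hc : HasDerivAt (fun θ => Real.cos θ ^ j)
        ((j:ℝ) * Real.cos θ ^ (j-1) * -Real.sin θ) θ :=
      (Real.hasDerivAt_cos θ).pow j
    have := (hs.mul hc).mul hQx
    refine this.congr_deriv ?_
    simp only [Pi.mul_apply]
    push_cast
    simp only [pow_succ]
    ring
  have hint := intervalIntegral.integral_eq_sub_of_hasDerivAt hder ?_
  · have hend : F π - F 0 = 0 := by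
      simp [hF, Real.sin_pi, Real.sin_zero, zero_pow (Nat.succ_ne_zero n)]
    rw [hend] at hint
    rw [intervalIntegral.integral_add, intervalIntegral.integral_sub,
      intervalIntegral.integral_const_mul, intervalIntegral.integral_const_mul,
      intervalIntegral.integral_const_mul] at hint
    · exact hint
    · exact (integrand_ii hr hne n (j+1) x).const_mul _
    · exact (integrand_ii hr hne (n+2) (j-1) x).const_mul _
    · exact ((integrand_ii hr hne n (j+1) x).const_mul _).sub
        ((integrand_ii hr hne (n+2) (j-1) x).const_mul _)
    · exact (integrand_ii hr hne (n+2) j (x-1)).const_mul _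
  · exact (((integrand_ii hr hne n (j+1) x).const_mul _).sub
      ((integrand_ii hr hne (n+2) (j-1) x).const_mul _)).add
      ((integrand_ii hr hne (n+2) j (x-1)).const_mul _)


lemma hasDerivAt_Qk (r θ : ℝ) : HasDerivAt (Qk r) (2 * r * Real.sin θ) θ := by
  have h1 : HasDerivAt (fun θ : ℝ => 1 + r ^ 2 - 2 * r * Real.cos θ)
      (-(2 * r * -Real.sin θ)) θ :=
    ((Real.hasDerivAt_cos θ).const_mul (2*r)).const_sub (1 + r^2)
  exact h1.congr_deriv (by ring)

lemma hasDerivAt_T (hr : 0 < r) (hne : r ≠ 1) {s : ℝ} (hs : 0 < s)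
    (hs2 : s ^ 2 = (1 - r ^ 2) ^ 2) (θ : ℝ) :
    HasDerivAt (fun θ => (θ + 2 * Real.arctan
      (2 * r * Real.sin θ / (1 + r ^ 2 + s - 2 * r * Real.cos θ))) / s)
      ((Qk r θ)⁻¹) θ := by
  have hden : ∀ ψ : ℝ, 0 < 1 + r ^ 2 + s - 2 * r * Real.cos ψ := by
    intro ψ
    have h1 : Real.cos ψ ≤ 1 := Real.cos_le_one ψ
    nlinarith [sq_nonneg (1 - r)]
  have hQ := Qk_pos hr hne θ
  have hsin : Real.sin θ ^ 2 = 1 - Real.cos θ ^ 2 := Real.sin_sq θ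
  -- derivative of the inner quotient
  have hnum : HasDerivAt (fun ψ => 2 * r * Real.sin ψ) (2 * r * Real.cos θ) θ :=
    (Real.hasDerivAt_sin θ).const_mul (2*r)
  have hdenD : HasDerivAt (fun ψ => 1 + r ^ 2 + s - 2 * r * Real.cos ψ)
      (2 * r * Real.sin θ) θ := by
    have h1 : HasDerivAt (fun ψ : ℝ => 1 + r ^ 2 + s - 2 * r * Real.cos ψ)
        (-(2 * r * -Real.sin θ)) θ :=
      ((Real.hasDerivAt_cos θ).const_mul (2*r)).const_sub (1 + r^2 + s)
    convert h1 using 1; ring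
  set c := Real.cos θ with hc
  set si := Real.sin θ with hsi
  set den := 1 + r ^ 2 + s - 2 * r * c with hdend
  have hden0 : (0:ℝ) < den := hden θ
  have hQne := hQ.ne'
  have hc0 : (0:ℝ) < 1 + r ^ 2 + s := by positivity
  have hu : HasDerivAt (fun ψ => 2 * r * Real.sin ψ / (1 + r ^ 2 + s - 2 * r * Real.cos ψ))
      ((2 * r * c * den - 2 * r * si * (2 * r * si)) / den ^ 2) θ :=
    hnum.div hdenD hden0.ne'
  have hnum_eq : 2 * r * c * den - 2 * r * si * (2 * r * si)
      = 2 * r * (1 + r ^ 2 + s) * c - 4 * r ^ 2 := by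
    rw [hdend]; linear_combination (-4*r^2) * hsin
  rw [hnum_eq] at hu
  have harc := hu.arctan
  have h1u : 1 + (2 * r * si / den) ^ 2 = 2 * (1 + r ^ 2 + s) * Qk r θ / den ^ 2 := by
    rw [div_pow, eq_div_iff (pow_ne_zero 2 hden0.ne'), add_mul, one_mul,
      div_mul_cancel₀ _ (pow_ne_zero 2 hden0.ne')]
    have hQdef : Qk r θ = 1 + r ^ 2 - 2 * r * c := rfl
    rw [hQdef, hdend]
    linear_combination (4*r^2) * hsin + hs2
  rw [h1u] at harc
  have e3 : 1 / (2 * (1 + r ^ 2 + s) * Qk r θ / den ^ 2)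
      * ((2 * r * (1 + r ^ 2 + s) * c - 4 * r ^ 2) / den ^ 2)
      = (2 * r * (1 + r ^ 2 + s) * c - 4 * r ^ 2) / (2 * (1 + r ^ 2 + s) * Qk r θ) := by
    field_simp
  rw [e3] at harc
  have hall := ((hasDerivAt_id θ).add (harc.const_mul 2)).div_const s
  refine hall.congr_deriv (Eq.symm ?_)
  have hQdef : Qk r θ = 1 + r ^ 2 - 2 * r * c := rfl
  rw [eq_div_iff hs.ne']
  have hQne' : 1 + r ^ 2 - 2 * r * c ≠ 0 := by rw [← hQdef]; exact hQne
  field_simp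
  rw [hQdef]
  linear_combination hs2

lemma integral_inv_Q (hr : 0 < r) (hne : r ≠ 1) {s : ℝ} (hs : 0 < s)
    (hs2 : s ^ 2 = (1 - r ^ 2) ^ 2) :
    (∫ θ in (0:ℝ)..π, (Qk r θ)⁻¹) = π / s := by
  have h := intervalIntegral.integral_eq_sub_of_hasDerivAt (a := 0) (b := π)
    (f := fun θ => (θ + 2 * Real.arctan
      (2 * r * Real.sin θ / (1 + r ^ 2 + s - 2 * r * Real.cos θ))) / s)
    (f' := fun θ => (Qk r θ)⁻¹)
    (fun θ _ => hasDerivAt_T hr hne hs hs2 θ) ?_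
  · rw [h]
    simp [Real.sin_pi, Real.sin_zero, Real.arctan_zero]
  · exact (Continuous.intervalIntegrable (by
      exact (Qk_cont r).inv₀ (fun θ => (Qk_pos hr hne θ).ne')) _ _)

lemma rpow_sq_half {v : ℝ} (hv0 : 0 ≤ v) : ((v ^ 2 : ℝ)) ^ ((1:ℝ)/2) = v := by
  rw [← Real.rpow_natCast v 2, ← Real.rpow_mul hv0]
  norm_num

lemma rpow_sq_3half {v : ℝ} (hv0 : 0 ≤ v) : ((v ^ 2 : ℝ)) ^ ((3:ℝ)/2) = v ^ 3 := by
  rw [← Real.rpow_natCast v 2, ← Real.rpow_mul hv0,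
    show ((2:ℕ):ℝ)*((3:ℝ)/2) = ((3:ℕ):ℝ) by push_cast; norm_num, Real.rpow_natCast]

lemma Qk_zero : Qk r 0 = (1 - r)^2 := by unfold Qk; rw [Real.cos_zero]; ring
lemma Qk_pi : Qk r π = (1 + r)^2 := by unfold Qk; rw [Real.cos_pi]; ring

/-- base case k = 1, j = 0. -/
lemma b10 (hr : 0 < r) (hne : r ≠ 1) {v : ℝ} (hv0 : 0 ≤ v) (hv2 : v ^ 2 = (1-r)^2) :
    Bi r 1 0 (-(1:ℝ)/2) = (1 + r - v) / r := by
  have h := intervalIntegral.integral_eq_sub_of_hasDerivAt (a := 0) (b := π)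
    (f := fun θ => Qk r θ ^ ((1:ℝ)/2) / r)
    (f' := fun θ => Real.sin θ ^ 1 * Real.cos θ ^ 0 * Qk r θ ^ (-(1:ℝ)/2))
    (fun θ _ => ?_) ((integrand_cont hr hne 1 0 _).intervalIntegrable _ _)
  · unfold Bi
    rw [h]
    rw [Qk_pi, Qk_zero, ← hv2, rpow_sq_half hv0,
      rpow_sq_half (by positivity : (0:ℝ) ≤ 1 + r)]
    ring
  · have hQne := (Qk_pos hr hne θ).ne'
    have hd := ((hasDerivAt_Qk r θ).rpow_const (p := (1:ℝ)/2) (Or.inl hQne)).div_const r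
    refine hd.congr_deriv (Eq.symm ?_)
    have he : (1:ℝ)/2 - 1 = -(1:ℝ)/2 := by norm_num
    rw [he]
    field_simp

/-- base case k = 1, j = 1. -/
lemma b11 (hr : 0 < r) (hne : r ≠ 1) {v : ℝ} (hv0 : 0 ≤ v) (hv2 : v ^ 2 = (1-r)^2) :
    Bi r 1 1 (-(1:ℝ)/2) =
      ((1+r^2)*(1+r) - (1+r)^3/3 - ((1+r^2)*v - v^3/3)) / (2*r^2) := by
  have h := intervalIntegral.integral_eq_sub_of_hasDerivAt (a := 0) (b := π)
    (f := fun θ => (1+r^2) * (Qk r θ ^ ((1:ℝ)/2) / (2*r^2)) - Qk r θ ^ ((3:ℝ)/2) / (6*r^2))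
    (f' := fun θ => Real.sin θ ^ 1 * Real.cos θ ^ 1 * Qk r θ ^ (-(1:ℝ)/2))
    (fun θ _ => ?_) ((integrand_cont hr hne 1 1 _).intervalIntegrable _ _)
  · unfold Bi
    rw [h]
    rw [Qk_pi, Qk_zero, ← hv2, rpow_sq_half hv0, rpow_sq_3half hv0,
      rpow_sq_half (by positivity : (0:ℝ) ≤ 1 + r),
      rpow_sq_3half (by positivity : (0:ℝ) ≤ 1 + r)]
    field_simp
    ring
  · have hQne := (Qk_pos hr hne θ).ne'
    have hd1 := ((hasDerivAt_Qk r θ).rpow_const (p := (1:ℝ)/2) (Or.inl hQne)).div_const (2*r^2)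
    have hd2 := ((hasDerivAt_Qk r θ).rpow_const (p := (3:ℝ)/2) (Or.inl hQne)).div_const (6*r^2)
    have hd := (hd1.const_mul (1+r^2)).sub hd2
    refine hd.congr_deriv (Eq.symm ?_)
    have he : (1:ℝ)/2 - 1 = -(1:ℝ)/2 := by norm_num
    have he2 : (3:ℝ)/2 - 1 = (1:ℝ)/2 := by norm_num
    have h32 : Qk r θ ^ ((1:ℝ)/2) = Qk r θ ^ (-(1:ℝ)/2) * Qk r θ := by
      rw [← Real.rpow_add_one hQne]; norm_num
    rw [he, he2, h32]
    have hQdef : Qk r θ = 1 + r ^ 2 - 2 * r * Real.cos θ := rfl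
    have hr0 : r ≠ 0 := ne_of_gt hr
    field_simp
    ring_nf
    linear_combination (Real.sin θ * Qk r θ ^ (-(1:ℝ)/2) * 6) * hQdef

/-- base case k = 2, j = 0. -/
lemma b20 (hr : 0 < r) (hne : r ≠ 1) {s : ℝ} (hs : 0 < s)
    (hs2 : s ^ 2 = (1 - r ^ 2) ^ 2) :
    Bi r 2 0 (-1:ℝ) = π*(1+r^2)/(4*r^2) - π*(1-r^2)^2/(4*r^2*s) := by
  have hQc : Continuous fun θ => (Qk r θ)⁻¹ :=
    (Qk_cont r).inv₀ (fun θ => (Qk_pos hr hne θ).ne')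
  have h1 : Bi r 2 0 (-1:ℝ) = ∫ θ in (0:ℝ)..π,
      ((2*r)⁻¹ * Real.cos θ + (1+r^2)/(4*r^2) - (1-r^2)^2/(4*r^2) * (Qk r θ)⁻¹) := by
    unfold Bi
    apply intervalIntegral.integral_congr
    intro θ _
    have hQne : Qk r θ ≠ 0 := (Qk_pos hr hne θ).ne'
    have hQdef : Qk r θ = 1 + r^2 - 2*r*Real.cos θ := rfl
    have hsin : Real.sin θ ^ 2 = 1 - Real.cos θ ^ 2 := Real.sin_sq θ
    have hr0 : r ≠ 0 := ne_of_gt hr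
    simp only [Real.rpow_neg_one, pow_zero, mul_one]
    have hQP : 1 + r^2 - 2*r*Real.cos θ ≠ 0 := by rw [← hQdef]; exact hQne
    rw [hsin]
    field_simp
    rw [hQdef]
    ring
  have i1 : IntervalIntegrable (fun θ => (2*r)⁻¹ * Real.cos θ + (1+r^2)/(4*r^2))
      volume 0 π := by apply Continuous.intervalIntegrable; fun_prop
  have i2 : IntervalIntegrable (fun θ => (1-r^2)^2/(4*r^2) * (Qk r θ)⁻¹) volume 0 π :=
    ((continuous_const.mul hQc).intervalIntegrable _ _)
  rw [h1, intervalIntegral.integral_sub i1 i2,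
    intervalIntegral.integral_add (by apply Continuous.intervalIntegrable; fun_prop)
      (intervalIntegrable_const),
    intervalIntegral.integral_const_mul, integral_cos,
    intervalIntegral.integral_const_mul, integral_inv_Q hr hne hs hs2,
    intervalIntegral.integral_const]
  have hr0 : r ≠ 0 := ne_of_gt hr
  simp only [Real.sin_pi, Real.sin_zero, smul_eq_mul, sub_zero]
  field_simp
  ring

/-- base case k = 2, j = 1. -/
lemma b21 (hr : 0 < r) (hne : r ≠ 1) {s : ℝ} (hs : 0 < s)
    (hs2 : s ^ 2 = (1 - r ^ 2) ^ 2) :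
    Bi r 2 1 (-1:ℝ) = π/(4*r) + π*(1-r^2)^2/(8*r^3)
      - π*(1+r^2)*(1-r^2)^2/(8*r^3*s) := by
  have hQc : Continuous fun θ => (Qk r θ)⁻¹ :=
    (Qk_cont r).inv₀ (fun θ => (Qk_pos hr hne θ).ne')
  have h1 : Bi r 2 1 (-1:ℝ) = ∫ θ in (0:ℝ)..π,
      ((2*r)⁻¹ * Real.cos θ ^ 2 + ((1+r^2)/(4*r^2)) * Real.cos θ + (1-r^2)^2/(8*r^3)
        - (1+r^2)*(1-r^2)^2/(8*r^3) * (Qk r θ)⁻¹) := by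
    unfold Bi
    apply intervalIntegral.integral_congr
    intro θ _
    have hQne : Qk r θ ≠ 0 := (Qk_pos hr hne θ).ne'
    have hQdef : Qk r θ = 1 + r^2 - 2*r*Real.cos θ := rfl
    have hsin : Real.sin θ ^ 2 = 1 - Real.cos θ ^ 2 := Real.sin_sq θ
    have hr0 : r ≠ 0 := ne_of_gt hr
    simp only [Real.rpow_neg_one, pow_one]
    have hQP : 1 + r^2 - 2*r*Real.cos θ ≠ 0 := by rw [← hQdef]; exact hQne
    rw [hsin]
    field_simp
    rw [hQdef]
    ring
  have i1 : IntervalIntegrable (fun θ => (2*r)⁻¹ * Real.cos θ ^ 2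
      + ((1+r^2)/(4*r^2)) * Real.cos θ + (1-r^2)^2/(8*r^3)) volume 0 π := by
    apply Continuous.intervalIntegrable; fun_prop
  have i2 : IntervalIntegrable (fun θ => (1+r^2)*(1-r^2)^2/(8*r^3) * (Qk r θ)⁻¹)
      volume 0 π := ((continuous_const.mul hQc).intervalIntegrable _ _)
  rw [h1, intervalIntegral.integral_sub i1 i2,
    intervalIntegral.integral_add (by apply Continuous.intervalIntegrable; fun_prop)
      (intervalIntegrable_const),
    intervalIntegral.integral_add (by apply Continuous.intervalIntegrable; fun_prop)
      (by apply Continuous.intervalIntegrable; fun_prop),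
    intervalIntegral.integral_const_mul, integral_cos_sq,
    intervalIntegral.integral_const_mul, integral_cos,
    intervalIntegral.integral_const_mul, integral_inv_Q hr hne hs hs2,
    intervalIntegral.integral_const]
  have hr0 : r ≠ 0 := ne_of_gt hr
  simp only [Real.sin_pi, Real.sin_zero, Real.cos_pi, Real.cos_zero, smul_eq_mul, sub_zero]
  field_simp
  ring


/-- The key induction step. -/
lemma Bi_step (hr : 0 < r) (hne : r ≠ 1) (k : ℕ) :
    (k : ℝ) * r * Bi r (k+2) 0 (-((k:ℝ)+2)/2) = ((k:ℝ)+1) * Bi r k 1 (-(k:ℝ)/2) ∧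
    (k : ℝ) * ((k:ℝ)+4) * r^2 * Bi r (k+2) 1 (-((k:ℝ)+2)/2) =
      ((k:ℝ)+2) * ((1+r^2) * ((k:ℝ)+1) * Bi r k 1 (-(k:ℝ)/2)
        + (2-(k:ℝ)) * r * Bi r k 0 (-(k:ℝ)/2)) - ((k:ℝ)+4) * r * Bi r k 0 (-(k:ℝ)/2) := by
  have hx : -(k:ℝ)/2 - 1 = -((k:ℝ)+2)/2 := by ring
  have hx2 : -((k:ℝ)+2)/2 + 1 = -(k:ℝ)/2 := by ring
  -- eJ : from ftc n=k j=0
  have eJ := Bi_ftc hr hne k 0 (-(k:ℝ)/2)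
  rw [hx] at eJ
  simp only [Nat.cast_zero, zero_mul, zero_add, sub_zero, Nat.zero_sub] at eJ
  -- eJ : (k+1) * Bi k 1 x0 + 2*(-k/2)*r * Bi (k+2) 0 x2 = 0
  have eK := Bi_ftc hr hne k 1 (-(k:ℝ)/2)
  rw [hx] at eK
  simp only [Nat.cast_one, one_mul] at eK
  -- eK : (k+1) * Bi k 2 x0 - Bi (k+2) 0 x0 + 2*(-k/2)*r*Bi (k+2) 1 x2 = 0
  have eL4 := Bi_sinsq hr hne k 0 (-(k:ℝ)/2)
  have eL4' := Bi_sinsq hr hne k 0 (-((k:ℝ)+2)/2)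
  have eL4'' := Bi_sinsq hr hne k 1 (-((k:ℝ)+2)/2)
  have eQ0 := Bi_Qmul hr hne k 0 (-((k:ℝ)+2)/2)
  rw [hx2] at eQ0
  have eQ2 := Bi_Qmul hr hne k 2 (-((k:ℝ)+2)/2)
  rw [hx2] at eQ2
  constructor
  · linear_combination -eJ
  · linear_combination (-((k:ℝ)+4)*r) * eK + (-((k:ℝ)+4)*r) * eL4
      - ((k:ℝ)+2) * ((1+r^2) * eJ + (-2*r) * eK + (-2*r) * eL4
        + ((1+r^2)*(k:ℝ)*r) * eL4' + (-2*(k:ℝ)*r^2) * eL4''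
        + (-(k:ℝ)*r) * eQ0 + ((k:ℝ)*r) * eQ2)

lemma Sv_one : Sv 1 = 2 := by
  unfold Sv
  simp [integral_sin]
  norm_num

lemma Sv_two : Sv 2 = π / 2 := by
  unfold Sv
  rw [integral_sin_sq]
  simp

lemma Sv_rec (k : ℕ) : Sv (k + 2) = ((k:ℝ)+1)/((k:ℝ)+2) * Sv k := by
  unfold Sv
  rw [integral_sin_pow]
  simp

lemma Sv_pos (k : ℕ) : 0 < Sv k := by
  unfold Sv
  apply intervalIntegral.intervalIntegral_pos_of_pos_on
  · exact (Continuous.intervalIntegrable (by fun_prop) _ _)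
  · intro x hx
    exact pow_pos (Real.sin_pos_of_pos_of_lt_pi hx.1 hx.2) k
  · exact Real.pi_pos

lemma claim_lt (hr : 0 < r) (hlt : r < 1) : ∀ k : ℕ, 1 ≤ k →
    Bi r k 0 (-(k:ℝ)/2) = Sv k ∧
    Bi r k 1 (-(k:ℝ)/2) = (k:ℝ)/((k:ℝ)+2) * Sv k * r := by
  have hne : r ≠ 1 := ne_of_lt hlt
  have hr0 : r ≠ 0 := ne_of_gt hr
  intro k
  induction k using Nat.strong_induction_on with
  | _ k ih =>
    intro hk
    match k with
    | 1 =>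
      have h0 := b10 hr hne (v := 1 - r) (by linarith) (by ring)
      have h1 := b11 hr hne (v := 1 - r) (by linarith) (by ring)
      constructor
      · rw [show -((1:ℕ):ℝ)/2 = -(1:ℝ)/2 by norm_num, h0, Sv_one]
        field_simp
        try ring
      · rw [show -((1:ℕ):ℝ)/2 = -(1:ℝ)/2 by norm_num, h1, Sv_one]
        push_cast
        field_simp
        try ring
    | 2 =>
      have hs : (0:ℝ) < 1 - r^2 := by nlinarith
      have h0 := b20 hr hne hs (by ring)
      have h1 := b21 hr hne hs (by ring)
      have h1r : 1 - r^2 ≠ 0 := ne_of_gt hs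
      constructor
      · rw [show -((2:ℕ):ℝ)/2 = -(1:ℝ) by norm_num, h0, Sv_two]
        field_simp
        try ring
      · rw [show -((2:ℕ):ℝ)/2 = -(1:ℝ) by norm_num, h1, Sv_two]
        push_cast
        field_simp
        try ring
    | (m+3) =>
      obtain ⟨hJ, hK⟩ := ih (m+1) (by omega) (by omega)
      obtain ⟨s1, s2⟩ := Bi_step hr hne (m+1)
      set κ : ℝ := ((m+1:ℕ):ℝ) with hκdef
      have hκpos : (0:ℝ) < κ := by positivity
      have hκr : κ * r ≠ 0 := by positivity
      have hden : κ * (κ+4) * r^2 ≠ 0 := by positivity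
      have hJ2 : Bi r ((m+1)+2) 0 (-(κ+2)/2)
          = (κ+1) * Bi r (m+1) 1 (-κ/2) / (κ * r) := by
        rw [eq_div_iff hκr]; linear_combination s1
      have hK2 : Bi r ((m+1)+2) 1 (-(κ+2)/2)
          = ((κ+2) * ((1+r^2) * (κ+1) * Bi r (m+1) 1 (-κ/2)
              + (2-κ) * r * Bi r (m+1) 0 (-κ/2))
            - (κ+4) * r * Bi r (m+1) 0 (-κ/2)) / (κ * (κ+4) * r^2) := by
        rw [eq_div_iff hden]; linear_combination s2
      rw [hK] at hJ2
      rw [hJ, hK] at hK2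
      have hexp : -((m+3:ℕ):ℝ)/2 = -(κ+2)/2 := by rw [hκdef]; push_cast; ring
      have hSv : Sv (m+3) = (κ+1)/(κ+2) * Sv (m+1) := by
        rw [show m+3 = (m+1)+2 from rfl, Sv_rec]
      have hκ2 : κ + 2 ≠ 0 := by positivity
      have hκ4 : κ + 4 ≠ 0 := by positivity
      constructor
      · rw [show m+3 = (m+1)+2 from rfl] at hSv ⊢
        rw [hexp, hJ2, hSv]
        field_simp
        try ring
      · rw [show m+3 = (m+1)+2 from rfl] at hSv ⊢
        rw [hexp, hK2, hSv]
        have hcast : ((m+1+2:ℕ):ℝ) = κ + 2 := by rw [hκdef]; push_cast; ring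
        rw [hcast]
        field_simp
        try ring

lemma claim_gt (hgt : 1 < r) : ∀ k : ℕ, 1 ≤ k →
    Bi r k 0 (-(k:ℝ)/2) = Sv k * (r^k)⁻¹ ∧
    Bi r k 1 (-(k:ℝ)/2) = (k:ℝ)/((k:ℝ)+2) * Sv k * (r^(k+1))⁻¹ := by
  have hr : 0 < r := by linarith
  have hne : r ≠ 1 := ne_of_gt hgt
  have hr0 : r ≠ 0 := ne_of_gt hr
  intro k
  induction k using Nat.strong_induction_on with
  | _ k ih =>
    intro hk
    match k with
    | 1 =>
      have h0 := b10 hr hne (v := r - 1) (by linarith) (by ring)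
      have h1 := b11 hr hne (v := r - 1) (by linarith) (by ring)
      constructor
      · rw [show -((1:ℕ):ℝ)/2 = -(1:ℝ)/2 by norm_num, h0, Sv_one]
        field_simp
        try ring
      · rw [show -((1:ℕ):ℝ)/2 = -(1:ℝ)/2 by norm_num, h1, Sv_one]
        push_cast
        field_simp
        try ring
    | 2 =>
      have hs : (0:ℝ) < r^2 - 1 := by nlinarith
      have h0 := b20 hr hne hs (by ring)
      have h1 := b21 hr hne hs (by ring)
      have h1r : r^2 - 1 ≠ 0 := ne_of_gt hs
      constructor
      · rw [show -((2:ℕ):ℝ)/2 = -(1:ℝ) by norm_num, h0, Sv_two]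
        field_simp
        try ring
      · rw [show -((2:ℕ):ℝ)/2 = -(1:ℝ) by norm_num, h1, Sv_two]
        push_cast
        field_simp
        try ring
    | (m+3) =>
      obtain ⟨hJ, hK⟩ := ih (m+1) (by omega) (by omega)
      obtain ⟨s1, s2⟩ := Bi_step hr hne (m+1)
      set κ : ℝ := ((m+1:ℕ):ℝ) with hκdef
      have hκpos : (0:ℝ) < κ := by positivity
      have hκr : κ * r ≠ 0 := by positivity
      have hden : κ * (κ+4) * r^2 ≠ 0 := by positivity
      have hJ2 : Bi r ((m+1)+2) 0 (-(κ+2)/2)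
          = (κ+1) * Bi r (m+1) 1 (-κ/2) / (κ * r) := by
        rw [eq_div_iff hκr]; linear_combination s1
      have hK2 : Bi r ((m+1)+2) 1 (-(κ+2)/2)
          = ((κ+2) * ((1+r^2) * (κ+1) * Bi r (m+1) 1 (-κ/2)
              + (2-κ) * r * Bi r (m+1) 0 (-κ/2))
            - (κ+4) * r * Bi r (m+1) 0 (-κ/2)) / (κ * (κ+4) * r^2) := by
        rw [eq_div_iff hden]; linear_combination s2
      rw [hK] at hJ2
      rw [hJ, hK] at hK2
      have hexp : -((m+3:ℕ):ℝ)/2 = -(κ+2)/2 := by rw [hκdef]; push_cast; ring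
      have hSv : Sv (m+3) = (κ+1)/(κ+2) * Sv (m+1) := by
        rw [show m+3 = (m+1)+2 from rfl, Sv_rec]
      have hκ2 : κ + 2 ≠ 0 := by positivity
      have hκ4 : κ + 4 ≠ 0 := by positivity
      have hpow : (r:ℝ)^(m+1) ≠ 0 := pow_ne_zero _ hr0
      have hpow2 : (r:ℝ)^(m+2) ≠ 0 := pow_ne_zero _ hr0
      have hpow3 : (r:ℝ)^(m+3) ≠ 0 := pow_ne_zero _ hr0
      have hpow4 : (r:ℝ)^(m+4) ≠ 0 := pow_ne_zero _ hr0
      constructor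
      · rw [show m+3 = (m+1)+2 from rfl] at hSv ⊢
        rw [hexp, hJ2, hSv]
        field_simp
        try ring
      · rw [show m+3 = (m+1)+2 from rfl] at hSv ⊢
        rw [hexp, hK2, hSv]
        have hcast : ((m+1+2:ℕ):ℝ) = κ + 2 := by rw [hκdef]; push_cast; ring
        rw [hcast]
        field_simp
        try ring


lemma sphereArea_pos {m : ℕ} (hm : 1 ≤ m) : 0 < sphereArea m := by
  unfold sphereArea
  have h1 : (0:ℝ) < (m:ℝ)/2 := by
    have : (1:ℝ) ≤ (m:ℝ) := by exact_mod_cast hm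
    linarith
  have h2 : (0:ℝ) < Real.pi ^ ((m:ℝ)/2) := Real.rpow_pos_of_pos Real.pi_pos _
  have h3 := Real.Gamma_pos_of_pos h1
  positivity

/-- value of ∫₀^{π/2} cos^k -/
lemma Sv_cos (k : ℕ) : Sv k = 2 * ∫ u in (0:ℝ)..(π/2), Real.cos u ^ k := by
  have hcont : IntervalIntegrable (fun u : ℝ => Real.cos u ^ k) volume (-(π/2)) 0 :=
    Continuous.intervalIntegrable (by fun_prop) _ _
  have hcont2 : IntervalIntegrable (fun u : ℝ => Real.cos u ^ k) volume 0 (π/2) :=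
    Continuous.intervalIntegrable (by fun_prop) _ _
  have h1 : Sv k = ∫ u in (-(π/2))..(π/2), Real.cos u ^ k := by
    unfold Sv
    have : ∀ θ : ℝ, Real.sin θ ^ k = (fun u => Real.cos u ^ k) (θ - π/2) := by
      intro θ; simp [Real.cos_sub_pi_div_two]
    rw [intervalIntegral.integral_congr (g := fun θ => (fun u => Real.cos u ^ k) (θ - π/2))
      (fun θ _ => this θ)]
    rw [intervalIntegral.integral_comp_sub_right (fun u => Real.cos u ^ k) (π/2)]
    norm_num
    rw [show π - π/2 = π/2 by ring]
  have h2 : ∫ u in (-(π/2))..(0:ℝ), Real.cos u ^ k = ∫ u in (0:ℝ)..(π/2), Real.cos u ^ k := by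
    have := intervalIntegral.integral_comp_neg (a := (0:ℝ)) (b := π/2)
      (fun u : ℝ => Real.cos u ^ k)
    rw [neg_zero] at this
    rw [← this]
    apply intervalIntegral.integral_congr
    intro θ _; simp
  have h3 := intervalIntegral.integral_add_adjacent_intervals hcont hcont2
  rw [h1, ← h3, h2]
  ring

lemma cos_int_rec (k : ℕ) : (∫ u in (0:ℝ)..(π/2), Real.cos u ^ (k+2))
    = ((k:ℝ)+1)/((k:ℝ)+2) * ∫ u in (0:ℝ)..(π/2), Real.cos u ^ k := by
  rw [integral_cos_pow]
  simp

lemma phi1_integrand (k : ℕ) (θ : ℝ) (hθ : θ ∈ Set.uIcc (0:ℝ) π) :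
    ((1:ℝ) - Real.cos θ) * Real.sin θ ^ k * (1 + 1^2 - 2*1*Real.cos θ) ^ (-(k:ℝ)/2)
      = 2 * Real.sin (θ/2)^2 * Real.cos (θ/2)^k := by
  rw [Set.uIcc_of_le Real.pi_pos.le] at hθ
  rcases eq_or_ne θ 0 with hz | hz
  · rw [hz]
    norm_num
  · have hth : 0 < θ/2 := by
      rcases lt_or_eq_of_le hθ.1 with h | h
      · linarith
      · exact absurd h.symm hz
    have hth2 : θ/2 < π := by
      have := hθ.2
      have := Real.pi_pos
      linarith
    have hz' : 0 < Real.sin (θ/2) := Real.sin_pos_of_pos_of_lt_pi hth hth2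
    have hcos : Real.cos θ = 1 - 2*Real.sin (θ/2)^2 := by
      have h := Real.cos_two_mul (θ/2)
      have h2 := Real.sin_sq_add_cos_sq (θ/2)
      rw [show 2*(θ/2) = θ by ring] at h
      nlinarith
    have hsin : Real.sin θ = 2*Real.sin (θ/2)*Real.cos (θ/2) := by
      have h := Real.sin_two_mul (θ/2)
      rw [show 2*(θ/2) = θ by ring] at h
      linarith
    have hbase : 1 + 1^2 - 2*1*Real.cos θ = (2*Real.sin (θ/2))^2 := by rw [hcos]; ring
    have hsq : (0:ℝ) < (2*Real.sin (θ/2))^2 := by positivity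
    have habs : (0:ℝ) ≤ |2*Real.sin (θ/2)| := abs_nonneg _
    have hrp : ((2*Real.sin (θ/2))^2) ^ (-(k:ℝ)/2) = (|2*Real.sin (θ/2)|^k)⁻¹ := by
      rw [← sq_abs, ← Real.rpow_natCast |2*Real.sin (θ/2)| 2, ← Real.rpow_mul habs,
        show ((2:ℕ):ℝ) * (-(k:ℝ)/2) = -(k:ℝ) by push_cast; ring,
        Real.rpow_neg habs, Real.rpow_natCast]
    rw [hbase, hcos, hsin, hrp]
    have habs2 : |2*Real.sin (θ/2)| = 2*Real.sin (θ/2) := abs_of_pos (by linarith)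
    rw [habs2]
    have h2k : (2*Real.sin (θ/2))^k ≠ 0 := pow_ne_zero _ (by positivity)
    field_simp
    ring


end Stmt5Aux

open Stmt5Aux

theorem stmt5 (d : ℕ) (hd : 3 ≤ d) (α : ℝ) (hα : α = 4 - (d : ℝ))
    (φ : ℝ → ℝ)
    (hφ : ∀ r : ℝ, φ r = sphereArea (d - 1) / sphereArea d *
      ∫ θ in (0:ℝ)..Real.pi,
        (r - Real.cos θ) * (Real.sin θ) ^ (d - 2) *
          (1 + r ^ 2 - 2 * r * Real.cos θ) ^ ((α - 2) / 2)) :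
    (∃ C : ℝ, ∀ r ∈ Set.Ioc (0:ℝ) 1, φ r / r = C) ∧
      StrictAntiOn (fun r => φ r / r) (Set.Ici 1) := by
  have hd2 : 2 ≤ d := by omega
  set k : ℕ := d - 2 with hkdef
  have hk1 : 1 ≤ k := by omega
  have hkd : ((k:ℕ):ℝ) = (d:ℝ) - 2 := by rw [hkdef, Nat.cast_sub hd2]; norm_num
  have hexp : (α - 2)/2 = -((k:ℕ):ℝ)/2 := by rw [hα, hkd]; ring
  set c0 : ℝ := sphereArea (d-1)/sphereArea d with hc0def
  have hc0 : 0 < c0 := div_pos (sphereArea_pos (by omega)) (sphereArea_pos (by omega))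
  have hSv := Sv_pos k
  have hk2 : ((k:ℝ)+2) ≠ 0 := by positivity
  have hkpos : (0:ℝ) < (k:ℝ) := by exact_mod_cast hk1
  have hφr : ∀ r : ℝ, 0 < r → r ≠ 1 →
      φ r = c0 * (r * Bi r k 0 (-(k:ℝ)/2) - Bi r k 1 (-(k:ℝ)/2)) := by
    intro r hr hne
    rw [hφ r, hexp]
    congr 1
    unfold Bi
    rw [← intervalIntegral.integral_const_mul,
      ← intervalIntegral.integral_sub ((integrand_ii hr hne k 0 _).const_mul r)
        (integrand_ii hr hne k 1 _)]
    apply intervalIntegral.integral_congr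
    intro θ _
    show (r - Real.cos θ) * Real.sin θ ^ k * (1 + r ^ 2 - 2 * r * Real.cos θ) ^ (-(k:ℝ)/2)
      = r * (Real.sin θ ^ k * Real.cos θ ^ 0 * Qk r θ ^ (-(k:ℝ)/2))
        - Real.sin θ ^ k * Real.cos θ ^ 1 * Qk r θ ^ (-(k:ℝ)/2)
    have : Qk r θ = 1 + r ^ 2 - 2 * r * Real.cos θ := rfl
    rw [this, pow_zero, pow_one]
    ring
  have hφ1 : φ 1 = c0 * (2/((k:ℝ)+2) * Sv k) := by
    rw [hφ 1, hexp]
    congr 1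
    rw [intervalIntegral.integral_congr
      (g := fun θ => (fun u => 2*Real.sin u^2*Real.cos u^k) (θ/2))
      (fun θ hθ => phi1_integrand k θ hθ)]
    rw [intervalIntegral.integral_comp_div (a := 0) (b := π)
      (f := fun u => 2*Real.sin u^2*Real.cos u^k) (by norm_num : (2:ℝ) ≠ 0)]
    have hsplit : (∫ u in ((0:ℝ)/2)..(π/2), 2*Real.sin u^2*Real.cos u^k)
        = 2*((∫ u in (0:ℝ)..(π/2), Real.cos u^k)
            - ∫ u in (0:ℝ)..(π/2), Real.cos u^(k+2)) := by
      rw [zero_div, ← intervalIntegral.integral_sub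
        (Continuous.intervalIntegrable (by fun_prop) _ _)
        (Continuous.intervalIntegrable (by fun_prop) _ _),
        ← intervalIntegral.integral_const_mul]
      apply intervalIntegral.integral_congr
      intro u _
      simp only
      rw [Real.sin_sq, pow_add]
      ring
    rw [hsplit, cos_int_rec k, Sv_cos k, smul_eq_mul]
    field_simp
    ring
  constructor
  · refine ⟨c0 * (2/((k:ℝ)+2) * Sv k), ?_⟩
    rintro r ⟨hr0, hr1⟩
    rcases lt_or_eq_of_le hr1 with hlt | heq
    · obtain ⟨hJ, hK⟩ := claim_lt hr0 hlt k hk1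
      rw [hφr r hr0 (ne_of_lt hlt), hJ, hK]
      have hr0' : r ≠ 0 := ne_of_gt hr0
      field_simp
      ring
    · rw [heq, hφ1, div_one]
  · set F : ℝ → ℝ := fun t => c0 * Sv k *
      (t ^ (-(k:ℤ)) - ((k:ℝ)/((k:ℝ)+2)) * t ^ (-(k:ℤ)-2)) with hFdef
    have hEq : Set.EqOn (fun r => φ r / r) F (Set.Ici 1) := by
      intro t ht
      simp only [hFdef]
      rcases eq_or_lt_of_le (show (1:ℝ) ≤ t from ht) with heq | hgt
      · rw [← heq, hφ1, div_one, one_zpow, one_zpow]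
        field_simp
        ring
      · obtain ⟨hJ, hK⟩ := claim_gt hgt k hk1
        have ht0 : (0:ℝ) < t := by linarith
        rw [hφr t ht0 (ne_of_gt hgt), hJ, hK]
        have hz1 : t ^ (-(k:ℤ)) = (t^k)⁻¹ := by rw [zpow_neg, zpow_natCast]
        have hz2 : t ^ (-(k:ℤ)-2) = (t^(k+2))⁻¹ := by
          rw [show -(k:ℤ)-2 = -((k:ℤ)+2) by ring, zpow_neg,
            show (k:ℤ)+2 = ((k+2:ℕ):ℤ) by push_cast; ring, zpow_natCast]
        rw [hz1, hz2]
        have h1 : t^k ≠ 0 := pow_ne_zero _ (ne_of_gt ht0)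
        have h2 : t^(k+1) ≠ 0 := pow_ne_zero _ (ne_of_gt ht0)
        have h3 : t^(k+2) ≠ 0 := pow_ne_zero _ (ne_of_gt ht0)
        have ht0' : t ≠ 0 := ne_of_gt ht0
        field_simp
        ring
    have hF : StrictAntiOn F (Set.Ici 1) := by
      apply strictAntiOn_of_deriv_neg (convex_Ici 1)
      · apply ContinuousOn.mul continuousOn_const
        apply ContinuousOn.sub
        · exact continuousOn_id.zpow₀ _ (fun x hx => Or.inl
            (by have : (0:ℝ) < x := lt_of_lt_of_le one_pos hx; simpa using this.ne'))
        · exact continuousOn_const.mul (continuousOn_id.zpow₀ _ (fun x hx => Or.inl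
            (by have : (0:ℝ) < x := lt_of_lt_of_le one_pos hx; simpa using this.ne')))
      · intro t ht
        rw [interior_Ici] at ht
        have ht0 : (0:ℝ) < t := by have : (1:ℝ) < t := ht; linarith
        have ht0' : t ≠ 0 := ne_of_gt ht0
        have h1 := hasDerivAt_zpow (-(k:ℤ)) t (Or.inl ht0')
        have h2 := hasDerivAt_zpow (-(k:ℤ)-2) t (Or.inl ht0')
        have hFd := ((h1.sub (h2.const_mul ((k:ℝ)/((k:ℝ)+2)))).const_mul (c0 * Sv k))
        rw [show deriv F t = _ from hFd.deriv]
        have hA : (0:ℝ) < t ^ (-(k:ℤ)-3) := zpow_pos ht0 _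
        have hsplit : t ^ (-(k:ℤ)-1) = t ^ (-(k:ℤ)-3) * t^2 := by
          rw [← zpow_natCast t 2, ← zpow_add₀ ht0']
          congr 1
          push_cast
          ring
        have hsplit2 : t ^ (-(k:ℤ)-2-1) = t ^ (-(k:ℤ)-3) := by congr 1; ring
        have ht1 : (1:ℝ) < t := ht
        have ht2 : 1 - t^2 < 0 := by nlinarith
        have key : c0 * Sv k * (((-(k:ℤ)):ℝ) * t ^ (-(k:ℤ)-1)
            - ((k:ℝ)/((k:ℝ)+2)) * (((-(k:ℤ)-2:ℤ)):ℝ) * t ^ (-(k:ℤ)-2-1))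
            = c0 * Sv k * ((k:ℝ) * t^(-(k:ℤ)-3) * (1 - t^2)) := by
          rw [hsplit2, hsplit]
          push_cast
          field_simp
          ring
        calc c0 * Sv k * (↑(-(k:ℤ)) * t ^ (-(k:ℤ)-1)
              - (k:ℝ)/((k:ℝ)+2) * (↑(-(k:ℤ)-2) * t ^ (-(k:ℤ)-2-1)))
            = c0 * Sv k * ((k:ℝ) * t^(-(k:ℤ)-3) * (1 - t^2)) := by
              rw [hsplit2, hsplit]; push_cast; field_simp; ring
          _ < 0 := mul_neg_of_pos_of_neg (by positivity)
              (mul_neg_of_pos_of_neg (by positivity) ht2)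
    intro a ha b hb hab
    have := hF ha hb hab
    simpa only [hEq ha, hEq hb] using this
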